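/- The map (V_L, V_R) ↦ ((V_A ∩ V_L, V_A ∩ V_R), (V_B ∩ V_L, V_B ∩ V_R)) is a bijection from the set of internal partitions (V_L, V_R) of G in which all four sets V_A ∩ V_L, V_A ∩ V_R, V_B ∩ V_L, V_B ∩ V_R are nonempty, onto the set of pairs ((S, R), (S', R')) where (S, R) is a proper bipartition of V_A, (S', R') is a proper bipartition of V_B, and q_S ≥ p_{S'}. In particular, the two sets have equal cardinality. -/

import Mathlib

open Finset

variable {V : Type*} [Fintype V] [DecidableEq V]

/-- `nbr G A v = |N_A(v)|`, the number of neighbors of `v` lying in `A`. -/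
def nbr (G : SimpleGraph V) [DecidableRel G.Adj] (A : Finset V) (v : V) : ℕ :=
  (G.neighborFinset v ∩ A).card

/-- The query vector `q_S` (2 entries per vertex) associated to a bipartition `(S, R)` of `V_A`;
vertices outside `S ∪ R` are exactly those of `V_B`. -/
def qvec (G : SimpleGraph V) [DecidableRel G.Adj] (n : ℕ) (S R : Finset V) (v : V) :
    Fin 2 → ℤ :=
  if v ∈ S then ![(nbr G S v : ℤ) - (nbr G R v : ℤ), (n : ℤ)]
  else if v ∈ R then ![(n : ℤ), (nbr G R v : ℤ) - (nbr G S v : ℤ)]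
  else ![(nbr G S v : ℤ) - (nbr G R v : ℤ), (nbr G R v : ℤ) - (nbr G S v : ℤ)]

/-- The data vector `p_{S'}` (2 entries per vertex) associated to a bipartition `(S', R')`
of `V_B`; vertices outside `S' ∪ R'` are exactly those of `V_A`. -/
def pvec (G : SimpleGraph V) [DecidableRel G.Adj] (n : ℕ) (S' R' : Finset V) (v : V) :
    Fin 2 → ℤ :=
  if v ∈ S' then ![(nbr G R' v : ℤ) - (nbr G S' v : ℤ), -(n : ℤ)]
  else if v ∈ R' then ![-(n : ℤ), (nbr G S' v : ℤ) - (nbr G R' v : ℤ)]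
  else ![(nbr G R' v : ℤ) - (nbr G S' v : ℤ), (nbr G S' v : ℤ) - (nbr G R' v : ℤ)]

/-- An internal partition of `G`: a proper bipartition `(V_L, V_R)` of the vertex set such that
every vertex has at least as many neighbors in its own part as in the other part. -/
def IsInternalPartition (G : SimpleGraph V) [DecidableRel G.Adj] (VL VR : Finset V) : Prop :=
  Disjoint VL VR ∧ VL ∪ VR = Finset.univ ∧ VL.Nonempty ∧ VR.Nonempty ∧
    (∀ v ∈ VL, nbr G VR v ≤ nbr G VL v) ∧ (∀ v ∈ VR, nbr G VL v ≤ nbr G VR v)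


lemma nbr_union (G : SimpleGraph V) [DecidableRel G.Adj] {A B : Finset V}
    (h : Disjoint A B) (v : V) : nbr G (A ∪ B) v = nbr G A v + nbr G B v := by
  unfold nbr
  rw [Finset.inter_union_distrib_left]
  exact Finset.card_union_of_disjoint
    (h.mono Finset.inter_subset_right Finset.inter_subset_right)

lemma nbr_le (G : SimpleGraph V) [DecidableRel G.Adj] (A : Finset V) (v : V) :
    nbr G A v ≤ Fintype.card V :=
  Finset.card_le_univ _

lemma cond_equiv (G : SimpleGraph V) [DecidableRel G.Adj] (n : ℕ) (hn : n = Fintype.card V)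
    (VA VB S R S' R' : Finset V) (hABd : Disjoint VA VB) (hABu : VA ∪ VB = Finset.univ)
    (hSRd : Disjoint S R) (hSR : S ∪ R = VA)
    (hS'R'd : Disjoint S' R') (hS'R' : S' ∪ R' = VB) :
    (∀ v : V, ∀ k : Fin 2, pvec G n S' R' v k ≤ qvec G n S R v k) ↔
    ((∀ v ∈ S ∪ S', nbr G (R ∪ R') v ≤ nbr G (S ∪ S') v) ∧
     (∀ v ∈ R ∪ R', nbr G (S ∪ S') v ≤ nbr G (R ∪ R') v)) := by
  have hSA : S ⊆ VA := hSR ▸ Finset.subset_union_left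
  have hRA : R ⊆ VA := hSR ▸ Finset.subset_union_right
  have hSB : S' ⊆ VB := hS'R' ▸ Finset.subset_union_left
  have hRB : R' ⊆ VB := hS'R' ▸ Finset.subset_union_right
  have dSS' : Disjoint S S' := hABd.mono hSA hSB
  have dSR' : Disjoint S R' := hABd.mono hSA hRB
  have dRS' : Disjoint R S' := hABd.mono hRA hSB
  have dRR' : Disjoint R R' := hABd.mono hRA hRB
  have hLn : ∀ v, nbr G (S ∪ S') v = nbr G S v + nbr G S' v := nbr_union G dSS'
  have hRn : ∀ v, nbr G (R ∪ R') v = nbr G R v + nbr G R' v := nbr_union G dRR'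
  have hle : ∀ A v, nbr G A v ≤ n := fun A v => hn ▸ nbr_le G A v
  constructor
  · intro h
    constructor
    · intro v hv
      rw [hLn, hRn]
      rcases Finset.mem_union.1 hv with hvS | hvS'
      · have h0 := h v 0
        have hvnS' : v ∉ S' := fun hc => (Finset.disjoint_left.1 dSS') hvS hc
        have hvnR' : v ∉ R' := fun hc => (Finset.disjoint_left.1 dSR') hvS hc
        simp only [pvec, qvec, if_pos hvS, if_neg hvnS', if_neg hvnR',
          Matrix.cons_val_zero] at h0
        omega
      · have h0 := h v 0
        have hvnS : v ∉ S := fun hc => (Finset.disjoint_left.1 dSS') hc hvS'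
        have hvnR : v ∉ R := fun hc => (Finset.disjoint_left.1 dRS') hc hvS'
        simp only [pvec, qvec, if_pos hvS', if_neg hvnS, if_neg hvnR,
          Matrix.cons_val_zero] at h0
        omega
    · intro v hv
      rw [hLn, hRn]
      rcases Finset.mem_union.1 hv with hvR | hvR'
      · have h1 := h v 1
        have hvnS : v ∉ S := fun hc => (Finset.disjoint_left.1 hSRd) hc hvR
        have hvnS' : v ∉ S' := fun hc => (Finset.disjoint_left.1 dRS') hvR hc
        have hvnR' : v ∉ R' := fun hc => (Finset.disjoint_left.1 dRR') hvR hc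
        simp only [pvec, qvec, if_pos hvR, if_neg hvnS, if_neg hvnS', if_neg hvnR',
          Matrix.cons_val_one, Matrix.head_cons, Matrix.cons_val_zero] at h1
        omega
      · have h1 := h v 1
        have hvnS : v ∉ S := fun hc => (Finset.disjoint_left.1 dSR') hc hvR'
        have hvnR : v ∉ R := fun hc => (Finset.disjoint_left.1 dRR') hc hvR'
        have hvnS' : v ∉ S' := fun hc => (Finset.disjoint_left.1 hS'R'd) hc hvR'
        simp only [pvec, qvec, if_pos hvR', if_neg hvnS, if_neg hvnR, if_neg hvnS',
          Matrix.cons_val_one, Matrix.head_cons, Matrix.cons_val_zero] at h1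
        omega
  · rintro ⟨hL, hR⟩ v k
    have hvcase : v ∈ S ∨ v ∈ R ∨ v ∈ S' ∨ v ∈ R' := by
      have : v ∈ VA ∪ VB := by rw [hABu]; exact Finset.mem_univ v
      rw [← hSR, ← hS'R'] at this
      simp only [Finset.mem_union] at this
      tauto
    have hleS := hle S v; have hleR := hle R v
    have hleS' := hle S' v; have hleR' := hle R' v
    rcases hvcase with hvS | hvR | hvS' | hvR'
    · have hLv := hL v (Finset.mem_union_left _ hvS)
      rw [hLn, hRn] at hLv
      have hvnS' : v ∉ S' := fun hc => (Finset.disjoint_left.1 dSS') hvS hc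
      have hvnR' : v ∉ R' := fun hc => (Finset.disjoint_left.1 dSR') hvS hc
      simp only [pvec, qvec, if_pos hvS, if_neg hvnS', if_neg hvnR']
      fin_cases k <;> simp <;> omega
    · have hRv := hR v (Finset.mem_union_left _ hvR)
      rw [hLn, hRn] at hRv
      have hvnS : v ∉ S := fun hc => (Finset.disjoint_left.1 hSRd) hc hvR
      have hvnS' : v ∉ S' := fun hc => (Finset.disjoint_left.1 dRS') hvR hc
      have hvnR' : v ∉ R' := fun hc => (Finset.disjoint_left.1 dRR') hvR hc
      simp only [pvec, qvec, if_pos hvR, if_neg hvnS, if_neg hvnS', if_neg hvnR']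
      fin_cases k <;> simp <;> omega
    · have hLv := hL v (Finset.mem_union_right _ hvS')
      rw [hLn, hRn] at hLv
      have hvnS : v ∉ S := fun hc => (Finset.disjoint_left.1 dSS') hc hvS'
      have hvnR : v ∉ R := fun hc => (Finset.disjoint_left.1 dRS') hc hvS'
      simp only [pvec, qvec, if_pos hvS', if_neg hvnS, if_neg hvnR]
      fin_cases k <;> simp <;> omega
    · have hRv := hR v (Finset.mem_union_right _ hvR')
      rw [hLn, hRn] at hRv
      have hvnS : v ∉ S := fun hc => (Finset.disjoint_left.1 dSR') hc hvR'
      have hvnR : v ∉ R := fun hc => (Finset.disjoint_left.1 dRR') hc hvR'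
      have hvnS' : v ∉ S' := fun hc => (Finset.disjoint_left.1 hS'R'd) hc hvR'
      simp only [pvec, qvec, if_pos hvR', if_neg hvnS, if_neg hvnR, if_neg hvnS']
      fin_cases k <;> simp <;> omega

/-- the map `(V_L, V_R) ↦ ((V_A ∩ V_L, V_A ∩ V_R), (V_B ∩ V_L, V_B ∩ V_R))`
is a bijection from the set of internal partitions of `G` in which all four intersections
are nonempty onto the set of pairs of proper bipartitions `((S, R), (S', R'))` of `V_A`
and `V_B` with `q_S ≥ p_{S'}`; in particular the two sets have equal cardinality. -/
theorem stmt_6 (G : SimpleGraph V) [DecidableRel G.Adj]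
    (n : ℕ) (hn : n = Fintype.card V)
    (VA VB : Finset V) (hABdisj : Disjoint VA VB) (hABuniv : VA ∪ VB = Finset.univ) :
    Set.BijOn
      (fun P : Finset V × Finset V => ((VA ∩ P.1, VA ∩ P.2), (VB ∩ P.1, VB ∩ P.2)))
      {P : Finset V × Finset V | IsInternalPartition G P.1 P.2 ∧
        (VA ∩ P.1).Nonempty ∧ (VA ∩ P.2).Nonempty ∧
        (VB ∩ P.1).Nonempty ∧ (VB ∩ P.2).Nonempty}
      {Q : (Finset V × Finset V) × (Finset V × Finset V) |
        (Disjoint Q.1.1 Q.1.2 ∧ Q.1.1 ∪ Q.1.2 = VA ∧ Q.1.1.Nonempty ∧ Q.1.2.Nonempty) ∧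
        (Disjoint Q.2.1 Q.2.2 ∧ Q.2.1 ∪ Q.2.2 = VB ∧ Q.2.1.Nonempty ∧ Q.2.2.Nonempty) ∧
        (∀ v : V, ∀ k : Fin 2, pvec G n Q.2.1 Q.2.2 v k ≤ qvec G n Q.1.1 Q.1.2 v k)} ∧
    Set.ncard {P : Finset V × Finset V | IsInternalPartition G P.1 P.2 ∧
        (VA ∩ P.1).Nonempty ∧ (VA ∩ P.2).Nonempty ∧
        (VB ∩ P.1).Nonempty ∧ (VB ∩ P.2).Nonempty} =
      Set.ncard {Q : (Finset V × Finset V) × (Finset V × Finset V) |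
        (Disjoint Q.1.1 Q.1.2 ∧ Q.1.1 ∪ Q.1.2 = VA ∧ Q.1.1.Nonempty ∧ Q.1.2.Nonempty) ∧
        (Disjoint Q.2.1 Q.2.2 ∧ Q.2.1 ∪ Q.2.2 = VB ∧ Q.2.1.Nonempty ∧ Q.2.2.Nonempty) ∧
        (∀ v : V, ∀ k : Fin 2, pvec G n Q.2.1 Q.2.2 v k ≤ qvec G n Q.1.1 Q.1.2 v k)} := by
  have split : ∀ X : Finset V, (VA ∩ X) ∪ (VB ∩ X) = X := by
    intro X
    rw [← Finset.union_inter_distrib_right, hABuniv, Finset.univ_inter]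
  have hbij : Set.BijOn
      (fun P : Finset V × Finset V => ((VA ∩ P.1, VA ∩ P.2), (VB ∩ P.1, VB ∩ P.2)))
      {P : Finset V × Finset V | IsInternalPartition G P.1 P.2 ∧
        (VA ∩ P.1).Nonempty ∧ (VA ∩ P.2).Nonempty ∧
        (VB ∩ P.1).Nonempty ∧ (VB ∩ P.2).Nonempty}
      {Q : (Finset V × Finset V) × (Finset V × Finset V) |
        (Disjoint Q.1.1 Q.1.2 ∧ Q.1.1 ∪ Q.1.2 = VA ∧ Q.1.1.Nonempty ∧ Q.1.2.Nonempty) ∧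
        (Disjoint Q.2.1 Q.2.2 ∧ Q.2.1 ∪ Q.2.2 = VB ∧ Q.2.1.Nonempty ∧ Q.2.2.Nonempty) ∧
        (∀ v : V, ∀ k : Fin 2, pvec G n Q.2.1 Q.2.2 v k ≤ qvec G n Q.1.1 Q.1.2 v k)} := by
    refine ⟨?_, ?_, ?_⟩
    · rintro ⟨VL, VR⟩ ⟨⟨hd, hu, _, _, hintL, hintR⟩, h1, h2, h3, h4⟩
      have dA : Disjoint (VA ∩ VL) (VA ∩ VR) :=
        hd.mono Finset.inter_subset_right Finset.inter_subset_right
      have dB : Disjoint (VB ∩ VL) (VB ∩ VR) :=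
        hd.mono Finset.inter_subset_right Finset.inter_subset_right
      have uA : (VA ∩ VL) ∪ (VA ∩ VR) = VA := by
        rw [← Finset.inter_union_distrib_left, hu, Finset.inter_univ]
      have uB : (VB ∩ VL) ∪ (VB ∩ VR) = VB := by
        rw [← Finset.inter_union_distrib_left, hu, Finset.inter_univ]
      refine ⟨⟨dA, uA, h1, h2⟩, ⟨dB, uB, h3, h4⟩, ?_⟩
      rw [cond_equiv G n hn VA VB _ _ _ _ hABdisj hABuniv dA uA dB uB]
      rw [split VL, split VR]
      exact ⟨hintL, hintR⟩
    · rintro ⟨L1, R1⟩ _ ⟨L2, R2⟩ _ h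
      simp only [Prod.mk.injEq] at h
      obtain ⟨⟨hA1, hA2⟩, hB1, hB2⟩ := h
      have e1 : L1 = L2 := by rw [← split L1, ← split L2, hA1, hB1]
      have e2 : R1 = R2 := by rw [← split R1, ← split R2, hA2, hB2]
      simp [e1, e2]
    · rintro ⟨⟨S, R⟩, ⟨S', R'⟩⟩ ⟨⟨hSRd, hSR, hSne, hRne⟩, ⟨hS'R'd, hS'R', hS'ne, hR'ne⟩, hqp⟩
      have hSA : S ⊆ VA := hSR ▸ Finset.subset_union_left
      have hRA : R ⊆ VA := hSR ▸ Finset.subset_union_right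
      have hSB : S' ⊆ VB := hS'R' ▸ Finset.subset_union_left
      have hRB : R' ⊆ VB := hS'R' ▸ Finset.subset_union_right
      have eAS : VA ∩ (S ∪ S') = S := by
        rw [Finset.inter_union_distrib_left,
          Finset.inter_eq_right.2 hSA,
          Finset.disjoint_iff_inter_eq_empty.1 (hABdisj.mono_right hSB),
          Finset.union_empty]
      have eAR : VA ∩ (R ∪ R') = R := by
        rw [Finset.inter_union_distrib_left,
          Finset.inter_eq_right.2 hRA,
          Finset.disjoint_iff_inter_eq_empty.1 (hABdisj.mono_right hRB),
          Finset.union_empty]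
      have eBS : VB ∩ (S ∪ S') = S' := by
        rw [Finset.inter_union_distrib_left,
          Finset.inter_eq_right.2 hSB,
          Finset.disjoint_iff_inter_eq_empty.1 (hABdisj.symm.mono_right hSA),
          Finset.empty_union]
      have eBR : VB ∩ (R ∪ R') = R' := by
        rw [Finset.inter_union_distrib_left,
          Finset.inter_eq_right.2 hRB,
          Finset.disjoint_iff_inter_eq_empty.1 (hABdisj.symm.mono_right hRA),
          Finset.empty_union]
      refine ⟨⟨S ∪ S', R ∪ R'⟩, ⟨⟨?_, ?_, hSne.mono Finset.subset_union_left,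
        hRne.mono Finset.subset_union_left, ?_, ?_⟩,
        ?_, ?_, ?_, ?_⟩, ?_⟩
      · refine Finset.disjoint_union_left.2 ⟨?_, ?_⟩ <;>
          refine Finset.disjoint_union_right.2 ⟨?_, ?_⟩
        · exact hSRd
        · exact hABdisj.mono hSA hRB
        · exact hABdisj.symm.mono hSB hRA
        · exact hS'R'd
      · rw [Finset.union_union_union_comm, hSR, hS'R', hABuniv]
      · exact ((cond_equiv G n hn VA VB S R S' R' hABdisj hABuniv hSRd hSR
          hS'R'd hS'R').1 hqp).1
      · exact ((cond_equiv G n hn VA VB S R S' R' hABdisj hABuniv hSRd hSR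
          hS'R'd hS'R').1 hqp).2
      · rw [eAS]; exact hSne
      · rw [eAR]; exact hRne
      · rw [eBS]; exact hS'ne
      · rw [eBR]; exact hR'ne
      · simp only [Prod.mk.injEq]
        exact ⟨⟨eAS, eAR⟩, eBS, eBR⟩
  exact ⟨hbij, by rw [← hbij.image_eq, Set.ncard_image_of_injOn hbij.injOn]⟩
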